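/- Let S ≥ 1 and let H : [0,∞) → M_S(ℝ) be continuous with H(t) essentially nonnegative for every t ≥ 0, and let h^*(t) = max_{1≤j≤S} ∑_{i=1}^S H(t)_{ij} be the largest column sum of H(t). Let x : [0,∞) → ℝ^S be differentiable with x'(t) = H(t)x(t) for all t ≥ 0 and x(0) ≥ 0 componentwise. Then ‖x(t)‖₁ ≤ exp(∫₀ᵗ h^*(τ) dτ) · ‖x(0)‖₁ for all t ≥ 0. -/

import Mathlib

open Set

open Filter Topology in
private lemma abs_slope_tendsto_aux {u : ℝ → ℝ} {t v : ℝ}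
    (hu : Filter.Tendsto (slope u t) (𝓝[>] t) (𝓝 v))
    (huc : Filter.Tendsto u (𝓝[>] t) (𝓝 (u t))) :
    Filter.Tendsto (slope (fun s => |u s|) t) (𝓝[>] t)
      (𝓝 (if u t < 0 then -v else if u t = 0 then |v| else v)) := by
  rcases lt_trichotomy (u t) 0 with h | h | h
  · rw [if_pos h]
    refine hu.neg.congr' ?_
    filter_upwards [huc.eventually_lt_const h] with z hz
    rw [slope_def_field, slope_def_field, abs_of_neg hz, abs_of_neg h]
    ring
  · rw [if_neg (by simp [h]), if_pos h]
    refine hu.abs.congr' ?_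
    filter_upwards [self_mem_nhdsWithin] with z (hz : t < z)
    rw [slope_def_field, slope_def_field, h, abs_zero, sub_zero, sub_zero,
      abs_div, abs_of_pos (sub_pos.2 hz)]
  · rw [if_neg (not_lt.2 h.le), if_neg h.ne']
    refine hu.congr' ?_
    filter_upwards [huc.eventually_const_lt h] with z hz
    rw [slope_def_field, slope_def_field, abs_of_pos hz, abs_of_pos h]

/-- Upper bound `‖x(t)‖₁ ≤ exp(∫₀ᵗ h*(τ) dτ) ‖x(0)‖₁` for solutions of
`x' = H(t)x` with essentially nonnegative `H(t)` and nonnegative initial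
condition, where `h*(t)` is the largest column sum of `H(t)`. -/
theorem l1_upper_bound_of_nonneg_init
    (S : ℕ) (hS : 1 ≤ S)
    (H : ℝ → Matrix (Fin S) (Fin S) ℝ)
    (hHcont : ∀ i j, ContinuousOn (fun t => H t i j) (Ici (0 : ℝ)))
    (hHess : ∀ t ∈ Ici (0 : ℝ), ∀ i j, i ≠ j → 0 ≤ H t i j)
    (hstar : ℝ → ℝ)
    (hhstar : ∀ t, hstar t = ⨆ j, ∑ i, H t i j)
    (x : ℝ → Fin S → ℝ)
    (hx : ∀ t ∈ Ici (0 : ℝ), ∀ i,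
      HasDerivWithinAt (fun s => x s i) ((H t).mulVec (x t) i) (Ici 0) t)
    (hx0 : ∀ i, 0 ≤ x 0 i) :
    ∀ t ∈ Ici (0 : ℝ),
      ∑ i, |x t i| ≤ Real.exp (∫ τ in (0 : ℝ)..t, hstar τ) * ∑ i, |x 0 i| := by
  classical
  haveI hne : Nonempty (Fin S) := ⟨⟨0, hS⟩⟩
  set f : ℝ → ℝ := fun s => ∑ i, |x s i| with hfdef
  set d : ℝ → ℝ := fun t => ∑ i,
      (if x t i < 0 then -((H t).mulVec (x t) i)
        else if x t i = 0 then |(H t).mulVec (x t) i| else (H t).mulVec (x t) i) with hddef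
  have hxc : ∀ i, ContinuousOn (fun s => x s i) (Ici (0 : ℝ)) :=
    fun i t ht => (hx t ht i).continuousWithinAt
  have hfc : ContinuousOn f (Ici (0 : ℝ)) :=
    continuousOn_finset_sum _ fun i _ => (hxc i).abs
  -- continuity of hstar
  have hstarC : ContinuousOn hstar (Ici (0 : ℝ)) := by
    have h1 : ContinuousOn
        (fun t => Finset.univ.sup' Finset.univ_nonempty (fun j => ∑ i, H t i j))
        (Ici (0 : ℝ)) :=
      ContinuousOn.finset_sup'_apply _ fun j _ =>
        continuousOn_finset_sum _ fun i _ => hHcont i j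
    refine h1.congr fun t _ => ?_
    rw [hhstar]
    exact (Finset.sup'_univ_eq_ciSup _).symm
  have hcol : ∀ t j, (∑ i, H t i j) ≤ hstar t := by
    intro t j
    rw [hhstar]
    exact le_ciSup (f := fun j => ∑ i, H t i j) (Set.finite_range _).bddAbove j
  -- the key differential inequality bound
  have hDle : ∀ t ∈ Ici (0 : ℝ), d t ≤ hstar t * f t := by
    intro t ht
    have h1 : d t ≤ ∑ i, ∑ j, H t i j * |x t j| := by
      refine Finset.sum_le_sum fun i _ => ?_
      rcases lt_trichotomy (x t i) 0 with h | h | h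
      · rw [if_pos h]
        have : -((H t).mulVec (x t) i) = ∑ j, H t i j * (-(x t j)) := by
          simp [Matrix.mulVec, dotProduct, ← Finset.sum_neg_distrib]
        rw [this]
        refine Finset.sum_le_sum fun j _ => ?_
        by_cases hji : j = i
        · subst hji
          rw [abs_of_neg h]
        · exact mul_le_mul_of_nonneg_left (neg_le_abs _)
            (hHess t ht i j fun hij => hji hij.symm)
      · rw [if_neg (by simp [h]), if_pos h]
        have : (H t).mulVec (x t) i = ∑ j, H t i j * x t j := by
          simp [Matrix.mulVec, dotProduct]
        rw [this]
        refine (Finset.abs_sum_le_sum_abs _ _).trans (Finset.sum_le_sum fun j _ => ?_)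
        by_cases hji : j = i
        · subst hji
          simp [h]
        · rw [abs_mul, abs_of_nonneg (hHess t ht i j fun hij => hji hij.symm)]
      · rw [if_neg (not_lt.2 h.le), if_neg h.ne']
        have : (H t).mulVec (x t) i = ∑ j, H t i j * x t j := by
          simp [Matrix.mulVec, dotProduct]
        rw [this]
        refine Finset.sum_le_sum fun j _ => ?_
        by_cases hji : j = i
        · subst hji
          rw [abs_of_pos h]
        · exact mul_le_mul_of_nonneg_left (le_abs_self _)
            (hHess t ht i j fun hij => hji hij.symm)
    have h2 : (∑ i, ∑ j, H t i j * |x t j|) = ∑ j, (∑ i, H t i j) * |x t j| := by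
      rw [Finset.sum_comm]
      simp [Finset.sum_mul]
    have h3 : (∑ j, (∑ i, H t i j) * |x t j|) ≤ ∑ j, hstar t * |x t j| :=
      Finset.sum_le_sum fun j _ => mul_le_mul_of_nonneg_right (hcol t j) (abs_nonneg _)
    calc d t ≤ ∑ i, ∑ j, H t i j * |x t j| := h1
      _ = ∑ j, (∑ i, H t i j) * |x t j| := h2
      _ ≤ ∑ j, hstar t * |x t j| := h3
      _ = hstar t * f t := by rw [← Finset.mul_sum]
  -- right slope of f tends to d
  have hslope : ∀ t ∈ Ici (0 : ℝ),
      Filter.Tendsto (slope f t) (nhdsWithin t (Set.Ioi t)) (nhds (d t)) := by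
    intro t ht
    have hsub : nhdsWithin t (Set.Ioi t) ≤ nhdsWithin t (Ici 0 \ {t}) :=
      nhdsWithin_mono t fun z hz =>
        ⟨mem_Ici.2 (le_trans (mem_Ici.1 ht) (le_of_lt hz)), fun h => (ne_of_gt hz) (mem_singleton_iff.1 h)⟩
    have hsub' : nhdsWithin t (Set.Ioi t) ≤ nhdsWithin t (Ici (0 : ℝ)) :=
      nhdsWithin_mono t fun z hz => mem_Ici.2 (le_trans (mem_Ici.1 ht) (le_of_lt hz))
    have hEq : slope f t = fun z => ∑ i, slope (fun s => |x s i|) t z := by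
      funext z
      simp only [slope_def_field, hfdef, ← Finset.sum_div, ← Finset.sum_sub_distrib]
    rw [hEq, hddef]
    refine tendsto_finset_sum _ fun i _ => ?_
    have h1 : Filter.Tendsto (slope (fun s => x s i) t) (nhdsWithin t (Set.Ioi t))
        (nhds ((H t).mulVec (x t) i)) :=
      ((hasDerivWithinAt_iff_tendsto_slope.1 (hx t ht i))).mono_left hsub
    have h2 : Filter.Tendsto (fun s => x s i) (nhdsWithin t (Set.Ioi t)) (nhds (x t i)) :=
      ((hxc i) t ht).mono_left hsub'
    exact abs_slope_tendsto_aux h1 h2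
  -- main argument on [0, b]
  intro b hb
  set I : ℝ → ℝ := fun s => ∫ τ in (0 : ℝ)..s, hstar τ with hIdef
  have hf0 : 0 ≤ f 0 := Finset.sum_nonneg fun i _ => abs_nonneg _
  have hIc : ContinuousOn I (Icc 0 b) := by
    have hint : MeasureTheory.IntegrableOn hstar (uIcc (0 : ℝ) b) := by
      rw [uIcc_of_le hb]
      exact (hstarC.mono Icc_subset_Ici_self).integrableOn_compact isCompact_Icc
    have := intervalIntegral.continuousOn_primitive_interval hint
    rwa [uIcc_of_le hb] at this
  have hI' : ∀ t ∈ Ico (0 : ℝ) b, HasDerivWithinAt I (hstar t) (Ici t) t := by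
    intro t ht
    have hint : IntervalIntegrable hstar MeasureTheory.volume 0 t := by
      apply ContinuousOn.intervalIntegrable
      apply hstarC.mono
      rw [uIcc_of_le ht.1]
      exact Icc_subset_Ici_self
    exact intervalIntegral.integral_hasDerivWithinAt_right hint
      (((hstarC.mono fun z (hz : t < z) => le_trans ht.1 hz.le)).stronglyMeasurableAtFilter_nhdsWithin
        measurableSet_Ioi t)
      ((hstarC t ht.1).mono fun z (hz : t < z) => le_trans ht.1 hz.le)
  have main : ∀ ε > (0 : ℝ), f b ≤ Real.exp (I b + ε * b) * (f 0 + ε) := by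
    intro ε hε
    set B : ℝ → ℝ := fun s => Real.exp (I s + ε * s) * (f 0 + ε) with hBdef
    have hBpos : ∀ s, 0 < B s := fun s => mul_pos (Real.exp_pos _) (by linarith)
    have hB' : ∀ t ∈ Ico (0 : ℝ) b,
        HasDerivWithinAt B ((hstar t + ε) * B t) (Ici t) t := by
      intro t ht
      have hlin : HasDerivWithinAt (fun s : ℝ => ε * s) ε (Ici t) t := by
        simpa using ((hasDerivAt_id t).const_mul ε).hasDerivWithinAt
      have h1 : HasDerivWithinAt (fun s => I s + ε * s) (hstar t + ε) (Ici t) t :=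
        (hI' t ht).add hlin
      have h2 := (h1.exp).mul_const (f 0 + ε)
      convert h2 using 1
      show (hstar t + ε) * (Real.exp (I t + ε * t) * (f 0 + ε)) = _
      ring
      all_goals rfl
    have happ := image_le_of_liminf_slope_right_lt_deriv_boundary'
      (f := f) (f' := d) (B := B) (B' := fun t => (hstar t + ε) * B t)
      (hfc.mono Icc_subset_Ici_self)
      (fun t ht r hr => ((hslope t ht.1).eventually_lt_const hr).frequently)
      (by
        have : B 0 = f 0 + ε := by
          simp [hBdef, hIdef, intervalIntegral.integral_same]
        rw [this]; linarith)
      (by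
        have : ContinuousOn (fun s => I s + ε * s) (Icc 0 b) :=
          hIc.add ((continuous_const.mul continuous_id).continuousOn)
        exact (Real.continuous_exp.comp_continuousOn this).mul continuousOn_const)
      hB'
      (by
        intro t ht hft
        have h1 := hDle t ht.1
        rw [hft] at h1
        show d t < (hstar t + ε) * B t
        nlinarith [mul_pos hε (hBpos t)])
    exact happ (right_mem_Icc.2 hb)
  have hlim : Filter.Tendsto (fun ε => Real.exp (I b + ε * b) * (f 0 + ε))
      (nhdsWithin (0:ℝ) (Set.Ioi (0:ℝ))) (nhds (Real.exp (I b) * f 0)) := by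
    have hc : Continuous (fun ε : ℝ => Real.exp (I b + ε * b) * (f 0 + ε)) := by
      continuity
    have h2 : Filter.Tendsto (fun ε => Real.exp (I b + ε * b) * (f 0 + ε))
        (nhdsWithin (0:ℝ) (Set.Ioi (0:ℝ))) (nhds (Real.exp (I b + 0 * b) * (f 0 + 0))) :=
      (hc.tendsto 0).mono_left nhdsWithin_le_nhds
    simpa using h2
  have : f b ≤ Real.exp (I b) * f 0 := by
    refine ge_of_tendsto hlim ?_
    filter_upwards [self_mem_nhdsWithin] with ε (hε : ε ∈ Ioi (0 : ℝ))
    exact main ε hε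
  exact this
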